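/- If ρ is a bipartite density operator such that for every Hermitian observable a on H_A there exists a measurement (an instrument implementing the projective measurement of a) whose unconditioned action leaves ρ invariant, then ρ is Alice-concordant. Equivalently: if for all complete orthogonal projector families {P_i} on H_A we have Σ_i (P_i ⊗ I)ρ(P_i ⊗ I) = ρ, then ρ = Σ_j p_j π_j ⊗ ρ_j with {π_j} mutually orthogonal rank-one projectors. -/

import Mathlib

open Matrix
open scoped Kronecker ComplexOrder

noncomputable section

abbrev Mat (n : Type) := Matrix n n ℂ

/-- A density operator: positive semidefinite with unit trace. -/
def IsDensity {n : Type} [Fintype n] (ρ : Mat n) : Prop :=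
  ρ.PosSemidef ∧ ρ.trace = 1

/-- A rank-one projector: Hermitian idempotent of trace one. -/
def IsRankOneProj {n : Type} [Fintype n] (π : Mat n) : Prop :=
  π.IsHermitian ∧ π * π = π ∧ π.trace = 1

/-- A mutually orthogonal family of operators. -/
def OrthFamily {n J : Type} [Fintype n] (π : J → Mat n) : Prop :=
  ∀ i j : J, i ≠ j → π i * π j = 0

/-- A probability distribution on a finite index set. -/
def IsProbDist {J : Type} [Fintype J] (p : J → ℝ) : Prop :=
  (∀ j, 0 ≤ p j) ∧ ∑ j, p j = 1

/-- Outer product |v⟩⟨v|. -/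
def outer {n : Type} (v : n → ℂ) : Mat n :=
  fun i j => v i * star (v j)

/-- Partial trace over the first (Alice) factor. -/
def traceA {a b : Type} [Fintype a] (ρ : Mat (a × b)) : Mat b :=
  fun i j => ∑ k, ρ (k, i) (k, j)

/-- Partial trace over the second (Bob) factor. -/
def traceB {a b : Type} [Fintype b] (ρ : Mat (a × b)) : Mat a :=
  fun i j => ∑ k, ρ (i, k) (j, k)

/-- Separable (unentangled): a convex combination of product density operators. -/
def Separable {a b : Type} [Fintype a] [Fintype b] (ρ : Mat (a × b)) : Prop :=
  ∃ (m : ℕ) (p : Fin m → ℝ) (σ : Fin m → Mat a) (τ : Fin m → Mat b),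
    IsProbDist p ∧ (∀ k, IsDensity (σ k)) ∧ (∀ k, IsDensity (τ k)) ∧
    ρ = ∑ k, (p k : ℂ) • (σ k ⊗ₖ τ k)

/-- Alice-concordant (zero Alice-discord): ρ = Σ_j p_j π_j ⊗ ρ_j with
{π_j} mutually orthogonal rank-one projectors on Alice's factor. -/
def AliceConcordant {a b : Type} [Fintype a] [Fintype b] (ρ : Mat (a × b)) : Prop :=
  ∃ (m : ℕ) (p : Fin m → ℝ) (π : Fin m → Mat a) (σ : Fin m → Mat b),
    IsProbDist p ∧ (∀ j, IsRankOneProj (π j)) ∧ OrthFamily π ∧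
    (∀ j, IsDensity (σ j)) ∧ ρ = ∑ j, (p j : ℂ) • (π j ⊗ₖ σ j)

/-- Bob-concordant: the symmetric notion. -/
def BobConcordant {a b : Type} [Fintype a] [Fintype b] (ρ : Mat (a × b)) : Prop :=
  ∃ (m : ℕ) (p : Fin m → ℝ) (σ : Fin m → Mat a) (π : Fin m → Mat b),
    IsProbDist p ∧ (∀ j, IsRankOneProj (π j)) ∧ OrthFamily π ∧
    (∀ j, IsDensity (σ j)) ∧ ρ = ∑ j, (p j : ℂ) • (σ j ⊗ₖ π j)

/-- Von Neumann entropy, via the eigenvalues of a Hermitian matrix. -/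
def vN {n : Type} [Fintype n] [DecidableEq n] (ρ : Mat n) : ℝ :=
  if h : ρ.IsHermitian then -∑ i, h.eigenvalues i * Real.log (h.eigenvalues i) else 0


lemma psd_real_smul {n : Type} [Fintype n] {M : Mat n} (h : M.PosSemidef)
    {c : ℝ} (hc : 0 ≤ c) : ((c : ℂ) • M).PosSemidef := by
  rw [Matrix.posSemidef_iff_dotProduct_mulVec]
  constructor
  · unfold Matrix.IsHermitian
    rw [Matrix.conjTranspose_smul, h.1]
    simp [Complex.star_def, Complex.conj_ofReal]
  · intro x
    rw [Matrix.smul_mulVec, dotProduct_smul]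
    exact smul_nonneg (by exact_mod_cast hc) (h.dotProduct_mulVec_nonneg x)

lemma std_herm {n : Type} [Fintype n] [DecidableEq n] (j : n) :
    (Matrix.single j j (1:ℂ)).IsHermitian := by
  unfold Matrix.IsHermitian
  ext i k
  simp [Matrix.conjTranspose_apply, Matrix.single]
  split_ifs <;> simp_all <;> aesop

lemma std_sum {n : Type} [Fintype n] [DecidableEq n] :
    ∑ j : n, Matrix.single j j (1:ℂ) = 1 := by
  ext j k
  rw [Matrix.sum_apply]
  by_cases h : j = k
  · subst h
    simp [Matrix.single, Matrix.one_apply]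
  · simp [Matrix.single, Matrix.one_apply, h]

lemma std_trace {n : Type} [Fintype n] [DecidableEq n] (j : n) :
    (Matrix.single j j (1:ℂ)).trace = 1 := by
  simp [Matrix.trace, Matrix.diag, Matrix.single]

lemma std_kron_diag {n b : Type} [Fintype n] [DecidableEq n] [Fintype b] [DecidableEq b] (j : n) :
    (Matrix.single j j (1:ℂ)) ⊗ₖ (1 : Mat b)
      = Matrix.diagonal (fun p : n × b => if p.1 = j then (1:ℂ) else 0) := by
  ext ⟨i,x⟩ ⟨k,y⟩
  simp [Matrix.single, Matrix.diagonal, Matrix.one_apply, Prod.ext_iff]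
  split_ifs <;> simp_all <;> aesop

lemma psd_diag_nonneg {n : Type} [Fintype n] [DecidableEq n] {M : Mat n}
    (h : M.PosSemidef) (x : n) : 0 ≤ M x x := by
  have := h.dotProduct_mulVec_nonneg (Pi.single x 1)
  simpa [Matrix.mulVec, dotProduct, Pi.single_apply, mul_ite, ite_mul] using this

lemma psd_trace_zero {n : Type} [Fintype n] [DecidableEq n] {M : Mat n} (h : M.PosSemidef)
    (ht : M.trace = 0) : M = 0 := by
  have hd : ∀ x : n, M x x = 0 := by
    intro x
    exact (Finset.sum_eq_zero_iff_of_nonneg (fun x _ => psd_diag_nonneg h x)).1 ht x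
      (Finset.mem_univ x)
  have hcol : ∀ x : n, M *ᵥ Pi.single x 1 = 0 := by
    intro x
    rw [← (h.dotProduct_mulVec_zero_iff (Pi.single x 1))]
    simpa [Matrix.mulVec, dotProduct, Pi.single_apply, mul_ite, ite_mul] using hd x
  ext y x
  have := congrFun (hcol x) y
  simpa [Matrix.mulVec_single] using this

/-- if every complete orthogonal projector family on H_A leaves ρ invariant
under the unrecorded projective measurement, then ρ is Alice-concordant. -/
theorem stmt_11 {a b : Type} [Fintype a] [Fintype b] [DecidableEq a] [DecidableEq b]
    (ρ : Mat (a × b)) (hρ : IsDensity ρ)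
    (hinv : ∀ (J : Type) [Fintype J] (P : J → Mat a),
      (∀ j, (P j).IsHermitian) → (∀ j, P j * P j = P j) → OrthFamily P →
      (∑ j, P j = 1) →
      ∑ j, (P j ⊗ₖ (1 : Mat b)) * ρ * (P j ⊗ₖ (1 : Mat b)) = ρ) :
    AliceConcordant ρ := by
  classical
  obtain ⟨hpos, htr⟩ := hρ
  have hbne : Nonempty b := by
    by_contra h
    rw [not_nonempty_iff] at h
    have h0 : ρ.trace = 0 := by
      rw [Matrix.trace]
      apply Finset.sum_eq_zero
      rintro ⟨i, x⟩ _
      exact (h.false x).elim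
    rw [h0] at htr
    exact one_ne_zero htr.symm
  have hblock : ∀ (i k : a) (x y : b), i ≠ k → ρ (i,x) (k,y) = 0 := by
    intro i k x y hik
    have h := hinv a (fun j => Matrix.single j j 1)
      (fun j => std_herm j)
      (fun j => by rw [Matrix.single_mul_single_same]; simp)
      (fun i j hij => Matrix.single_mul_single_of_ne (1:ℂ) i i j hij 1)
      std_sum
    have h2 := congrFun (congrFun h (i,x)) (k,y)
    rw [Matrix.sum_apply] at h2
    simp only [std_kron_diag, Matrix.diagonal_mul, Matrix.mul_diagonal] at h2
    rw [Finset.sum_eq_zero] at h2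
    · exact h2.symm
    · intro j _
      by_cases hj : i = j
      · subst hj
        have : ¬ (k = i) := fun hc => hik hc.symm
        simp [this]
      · simp [hj]
  -- diagonal blocks
  set B : a → Mat b := fun i => Matrix.of fun x y => ρ (i,x) (i,y) with hBdef
  have hBpsd : ∀ i, (B i).PosSemidef := by
    intro i
    rw [Matrix.posSemidef_iff_dotProduct_mulVec]
    constructor
    · unfold Matrix.IsHermitian
      ext x y
      have := congrFun (congrFun hpos.1 (i,x)) (i,y)
      simpa [B, Matrix.conjTranspose_apply] using this
    · intro v
      have h := hpos.dotProduct_mulVec_nonneg (fun p : a × b => if p.1 = i then v p.2 else 0)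
      have he : dotProduct (star (fun p : a × b => if p.1 = i then v p.2 else 0))
          (ρ *ᵥ (fun p : a × b => if p.1 = i then v p.2 else 0))
          = dotProduct (star v) ((B i) *ᵥ v) := by
        simp only [B, dotProduct, Matrix.mulVec, Pi.star_apply, Fintype.sum_prod_type,
          Matrix.of_apply, apply_ite star, star_zero, ite_mul, zero_mul, mul_ite, mul_zero]
        rw [Finset.sum_comm]
        simp [Finset.sum_ite_eq']
      rw [he] at h
      exact h
  have hdnn : ∀ i, 0 ≤ (B i).trace := by
    intro i
    rw [Matrix.trace]
    apply Finset.sum_nonneg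
    intro x _
    exact psd_diag_nonneg (hBpsd i) x
  set q : a → ℝ := fun i => ((B i).trace).re with hqdef
  have hq0 : ∀ i, 0 ≤ q i := fun i => (Complex.nonneg_iff.1 (hdnn i)).1
  have hqc : ∀ i, (B i).trace = ((q i : ℝ) : ℂ) := by
    intro i
    have h := Complex.nonneg_iff.1 (hdnn i)
    exact Complex.ext rfl (by simp [q, h.2])
  have htrsum : ∑ i, (B i).trace = 1 := by
    rw [← htr, Matrix.trace, Fintype.sum_prod_type]
    simp [Matrix.trace, Matrix.diag, B]
  have hqs : ∑ i, q i = 1 := by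
    have h2 : ∑ i, ((q i : ℝ) : ℂ) = 1 := by
      rw [← htrsum]
      exact Finset.sum_congr rfl (fun i _ => (hqc i).symm)
    exact_mod_cast h2
  have hB0 : ∀ i, q i = 0 → B i = 0 := by
    intro i h0
    refine psd_trace_zero (hBpsd i) ?_
    rw [hqc i, h0]
    simp
  -- the decomposition
  set e : Fin (Fintype.card a) ≃ a := (Fintype.equivFin a).symm with hedef
  refine ⟨Fintype.card a, fun j => q (e j),
    fun j => Matrix.single (e j) (e j) 1,
    fun j => if q (e j) = 0 then (((Fintype.card b : ℝ)⁻¹ : ℝ) : ℂ) • (1 : Mat b)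
      else (((q (e j))⁻¹ : ℝ) : ℂ) • B (e j), ⟨?_, ?_⟩, ?_, ?_, ?_, ?_⟩
  · exact fun j => hq0 (e j)
  · rw [Equiv.sum_comp e q]
    exact hqs
  · intro j
    refine ⟨std_herm (e j), by rw [Matrix.single_mul_single_same]; simp, std_trace (e j)⟩
  · intro i j hij
    exact Matrix.single_mul_single_of_ne (1:ℂ) (e i) (e i) (e j) (fun h => hij (e.injective h)) 1
  · intro j
    by_cases h : q (e j) = 0
    · simp only [h, if_true, if_pos]
      constructor
      · exact psd_real_smul Matrix.PosSemidef.one (inv_nonneg.2 (Nat.cast_nonneg _))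
      · rw [Matrix.trace_smul, Matrix.trace_one]
        have hb : (Fintype.card b : ℝ) ≠ 0 := Nat.cast_ne_zero.2 Fintype.card_ne_zero
        push_cast
        field_simp
        rw [smul_eq_mul, one_div, inv_mul_cancel₀ (by exact_mod_cast hb)]
    · simp only [h, if_false, if_neg]
      constructor
      · exact psd_real_smul (hBpsd (e j)) (inv_nonneg.2 (hq0 (e j)))
      · rw [Matrix.trace_smul, hqc (e j)]
        push_cast
        rw [smul_eq_mul]
        exact inv_mul_cancel₀ (Complex.ofReal_ne_zero.2 h)
  · ext ⟨i,x⟩ ⟨k,y⟩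
    rw [Matrix.sum_apply]
    rw [← Equiv.sum_comp e.symm
      (fun j => ((q (e j) : ℂ) • (Matrix.single (e j) (e j) 1 ⊗ₖ
        (if q (e j) = 0 then (((Fintype.card b : ℝ)⁻¹ : ℝ) : ℂ) • (1 : Mat b)
          else (((q (e j))⁻¹ : ℝ) : ℂ) • B (e j)))) (i,x) (k,y))]
    simp only [Equiv.apply_symm_apply, Matrix.smul_apply, Matrix.kroneckerMap_apply,
      Matrix.single, Matrix.of_apply]
    by_cases hik : i = k
    · subst hik
      rw [Finset.sum_eq_single i]
      · simp only [if_pos (show i = i ∧ i = i from ⟨rfl, rfl⟩)]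
        by_cases h : q i = 0
        · rw [if_pos h, h]
          have hrB : ρ (i,x) (i,y) = (B i) x y := rfl
          rw [hrB, hB0 i h]
          simp
        · rw [if_neg h]
          have hrB : ρ (i,x) (i,y) = (B i) x y := rfl
          rw [hrB]
          simp only [Matrix.smul_apply, smul_eq_mul, and_self, eq_self_iff_true, if_true,
            one_mul]
          push_cast
          rw [← mul_assoc, mul_inv_cancel₀ (Complex.ofReal_ne_zero.2 h), one_mul]
      · intro l _ hl
        simp [hl]
      · intro hmem
        exact absurd (Finset.mem_univ i) hmem
    · rw [hblock i k x y hik]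
      symm
      apply Finset.sum_eq_zero
      intro l _
      have : ¬ (l = i ∧ l = k) := fun hc => hik (hc.1 ▸ hc.2)
      simp [this]
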